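/- In the small-coupling setting (u ≡ 0, b̃_n = b⁰_n + t v_n), for every λ ∈ ℂ the coefficient of t¹ in the polynomial t ↦ A(λ,t) vanishes, i.e. ∂A/∂t(λ,0) = 0; consequently A(λ,t) = O(t²) as t → 0. -/

import Mathlib

open Polynomial Asymptotics Filter

lemma wronskian_step (a β γ : ℤ → ℝ) (y z : ℤ → Polynomial ℝ)
    (hy : ∀ n : ℤ, C (a (n - 1)) * y (n - 1) + C (a n) * y (n + 1) + C (β n) * y n = X * y n)
    (hz : ∀ n : ℤ, C (a (n - 1)) * z (n - 1) + C (a n) * z (n + 1) + C (γ n) * z n = X * z n)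
    (n : ℤ) :
    C (a n) * (y n * z (n + 1) - y (n + 1) * z n)
      - C (a (n - 1)) * (y (n - 1) * z n - y n * z (n - 1))
      = (C (β n) - C (γ n)) * (y n * z n) := by
  linear_combination (y n) * hz n - (z n) * hy n

lemma downward_eq (a : ℤ → ℝ) (ha : ∀ n, a n ≠ 0) (b : ℤ → ℝ) (p : ℤ)
    (Z W : ℤ → Polynomial ℝ)
    (hZ : ∀ n : ℤ, C (a (n - 1)) * Z (n - 1) + C (a n) * Z (n + 1) + C (b n) * Z n = X * Z n)
    (hW : ∀ n : ℤ, C (a (n - 1)) * W (n - 1) + C (a n) * W (n + 1) + C (b n) * W n = X * W n)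
    (hbc : ∀ n : ℤ, p < n → Z n = W n) :
    ∀ n : ℤ, Z n = W n := by
  have key : ∀ k : ℕ, ∀ n : ℤ, p + 1 - (k : ℤ) ≤ n → Z n = W n := by
    intro k
    induction k with
    | zero => intro n hn; exact hbc n (by omega)
    | succ k ih =>
      intro n hn
      by_cases h : p + 1 - (k : ℤ) ≤ n
      · exact ih n h
      · have h1 : Z (n+1) = W (n+1) := ih _ (by omega)
        have h2 : Z (n+2) = W (n+2) := ih _ (by push_cast at hn ⊢; omega)
        have hz := hZ (n+1); have hw := hW (n+1)
        rw [show n+1-1 = n by ring, show n+1+1 = n+2 by ring] at hz hw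
        have hC : (C (a n) : Polynomial ℝ) ≠ 0 := by simpa using ha n
        apply mul_left_cancel₀ hC
        linear_combination hz - hw - C (a (n+1)) * h2 - C (b (n+1)) * h1 + X * h1
  intro n
  exact key (p + 1 - n).toNat n (by omega)

lemma poly_dep (a : ℤ → ℝ) (ha : ∀ n, a n ≠ 0) (b v : ℤ → ℝ) (p : ℤ) (lam : ℂ)
    (Y : ℝ → ℤ → Polynomial ℝ) (Y0 : ℤ → Polynomial ℝ)
    (hrec : ∀ (t : ℝ) (n : ℤ), C (a (n - 1)) * Y t (n - 1) + C (a n) * Y t (n + 1)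
        + C (b n + t * v n) * Y t n = X * Y t n)
    (hbc : ∀ (t : ℝ) (n : ℤ), p < n → Y t n = Y0 n) :
    ∀ n : ℤ, ∃ P : Polynomial ℂ, ∀ t : ℝ, aeval lam (Y t n) = P.eval (t : ℂ) := by
  have key : ∀ k : ℕ, ∀ n : ℤ, p + 1 - (k : ℤ) ≤ n →
      ∃ P : Polynomial ℂ, ∀ t : ℝ, aeval lam (Y t n) = P.eval (t : ℂ) := by
    intro k
    induction k with
    | zero =>
      intro n hn
      refine ⟨Polynomial.C (aeval lam (Y0 n)), fun t => ?_⟩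
      rw [hbc t n (by omega)]; simp
    | succ k ih =>
      intro n hn
      by_cases h : p + 1 - (k : ℤ) ≤ n
      · exact ih n h
      · obtain ⟨P1, hP1⟩ := ih (n+1) (by push_cast at hn ⊢; omega)
        obtain ⟨P2, hP2⟩ := ih (n+2) (by push_cast at hn ⊢; omega)
        refine ⟨Polynomial.C ((a n : ℂ))⁻¹ *
          ((Polynomial.C lam - Polynomial.C ((b (n+1) : ℝ) : ℂ)
            - Polynomial.C ((v (n+1) : ℝ) : ℂ) * Polynomial.X) * P1
            - Polynomial.C ((a (n+1) : ℝ) : ℂ) * P2), fun t => ?_⟩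
        have hz := hrec t (n+1)
        rw [show n+1-1 = n by ring, show n+1+1 = n+2 by ring] at hz
        have hz' := congrArg (aeval lam) hz
        simp only [map_add, map_mul, aeval_C, aeval_X, Complex.coe_algebraMap] at hz'
        rw [hP1, hP2] at hz'
        simp only [eval_mul, eval_sub, eval_C, eval_X, Complex.ofReal_add, Complex.ofReal_mul] at hz' ⊢
        have hane : ((a n : ℝ) : ℂ) ≠ 0 := by
          simpa [Complex.ofReal_ne_zero] using ha n
        field_simp
        linear_combination hz'
  intro n
  exact key (p + 1 - n).toNat n (by omega)

theorem stmt13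
    (q : ℕ) (hq : 1 ≤ q)
    (a b : ℤ → ℝ)
    (ha_per : ∀ n : ℤ, a (n + (q : ℤ)) = a n)
    (hb_per : ∀ n : ℤ, b (n + (q : ℤ)) = b n)
    (ha_pos : ∀ n : ℤ, 0 < a n)
    (θ φ : ℤ → Polynomial ℝ)
    (hθ_rec : ∀ n : ℤ,
      C (a (n - 1)) * θ (n - 1) + C (a n) * θ (n + 1) + C (b n) * θ n = X * θ n)
    (hφ_rec : ∀ n : ℤ,
      C (a (n - 1)) * φ (n - 1) + C (a n) * φ (n + 1) + C (b n) * φ n = X * φ n)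
    (hθ0 : θ 0 = 1) (hθ1 : θ 1 = 0) (hφ0 : φ 0 = 0) (hφ1 : φ 1 = 1)
    (Δl : Polynomial ℝ) (hΔl : Δl = C ((2:ℝ)⁻¹) * (φ ((q:ℤ) + 1) + θ (q:ℤ)))
    (φh : Polynomial ℝ) (hφh : φh = C ((2:ℝ)⁻¹) * (φ ((q:ℤ) + 1) - θ (q:ℤ)))
    (p : ℕ) (hp : 1 ≤ p)
    (v : ℤ → ℝ)
    (hv_supp : ∀ n : ℤ, (n < 0 ∨ (p:ℤ) < n) → v n = 0)
    (hv0 : v 0 ≠ 0) (hvp : v (p:ℤ) ≠ 0)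
    (θt φt : ℝ → ℤ → Polynomial ℝ)
    (hθt_rec : ∀ (t : ℝ) (n : ℤ),
      C (a (n - 1)) * θt t (n - 1) + C (a n) * θt t (n + 1)
        + C (b n + t * v n) * θt t n = X * θt t n)
    (hφt_rec : ∀ (t : ℝ) (n : ℤ),
      C (a (n - 1)) * φt t (n - 1) + C (a n) * φt t (n + 1)
        + C (b n + t * v n) * φt t n = X * φt t n)
    (hθt_bc : ∀ (t : ℝ) (n : ℤ), (p:ℤ) < n → θt t n = θ n)
    (hφt_bc : ∀ (t : ℝ) (n : ℤ), (p:ℤ) < n → φt t n = φ n)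
    (Af : ℂ → ℝ → ℂ)
    (hAf : ∀ (lam : ℂ) (t : ℝ), Af lam t = (2 : ℂ)⁻¹ *
      ((aeval lam (φt t 1) - aeval lam (φ 1))
        + ((t * v 0 / a 0 : ℝ) : ℂ) * aeval lam (φt t 0)
        + (aeval lam (θt t 0) - aeval lam (θ 0)))) :
    ∀ lam : ℂ, HasDerivAt (fun t : ℝ => Af lam t) 0 0 ∧
      (fun t : ℝ => Af lam t) =O[nhds (0:ℝ)] (fun t : ℝ => t ^ 2) := by
  intro lam
  have ha : ∀ n : ℤ, a n ≠ 0 := fun n => (ha_pos n).ne'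
  -- t = 0 values
  have hθzero : ∀ n : ℤ, θt 0 n = θ n :=
    downward_eq a ha b (p:ℤ) (θt 0) θ
      (fun n => by simpa using hθt_rec 0 n) hθ_rec (hθt_bc 0)
  have hφzero : ∀ n : ℤ, φt 0 n = φ n :=
    downward_eq a ha b (p:ℤ) (φt 0) φ
      (fun n => by simpa using hφt_rec 0 n) hφ_rec (hφt_bc 0)
  -- polynomial dependence on t
  obtain ⟨Pθ, hPθ⟩ := Classical.axiomOfChoice (poly_dep a ha b v (p:ℤ) lam θt θ hθt_rec hθt_bc)
  obtain ⟨Pφ, hPφ⟩ := Classical.axiomOfChoice (poly_dep a ha b v (p:ℤ) lam φt φ hφt_rec hφt_bc)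
  -- unperturbed Wronskian is constant
  have hWconst : ∀ k : ℕ,
      C (a (k:ℤ)) * (θ (k:ℤ) * φ ((k:ℤ)+1) - θ ((k:ℤ)+1) * φ (k:ℤ)) = C (a 0) := by
    intro k
    induction k with
    | zero => simp [hθ0, hθ1, hφ0, hφ1]
    | succ k ih =>
      have hs := wronskian_step a b b θ φ hθ_rec hφ_rec ((k:ℤ)+1)
      rw [show (k:ℤ)+1-1 = (k:ℤ) by ring] at hs
      push_cast
      linear_combination hs + ih
  -- value of φ, θ at -1
  have hφm1 : C (a (-1)) * φ (-1) = - C (a 0) := by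
    have h := hφ_rec 0
    norm_num at h
    rw [hφ0, hφ1] at h
    linear_combination h
  have hθm1 : C (a (-1)) * θ (-1) = X - C (b 0) := by
    have h := hθ_rec 0
    norm_num at h
    rw [hθ0, hθ1] at h
    linear_combination h
  -- the key polynomial identity, for every t
  have polyid : ∀ t : ℝ,
      C (a 0) * (φt t 1 - 1) + C (t * v 0) * φt t 0 + C (a 0) * (θt t 0 - 1)
        = ∑ i ∈ Finset.range (p+2),
            C (t * v (i:ℤ)) * (φt t (i:ℤ) * θ (i:ℤ) - θt t (i:ℤ) * φ (i:ℤ)) := by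
    intro t
    have hCb : ∀ n : ℤ, C (b n + t * v n) - C (b n) = C (t * v n) := by
      intro n; rw [C_add]; ring
    have hstep1 : ∀ n : ℤ,
        C (a n) * (θt t n * φ (n+1) - θt t (n+1) * φ n)
          - C (a (n-1)) * (θt t (n-1) * φ n - θt t n * φ (n-1))
          = C (t * v n) * (θt t n * φ n) := by
      intro n
      have hs := wronskian_step a (fun m => b m + t * v m) b (θt t) φ (hθt_rec t) hφ_rec n
      linear_combination hs + (θt t n * φ n) * hCb n
    have hstep2 : ∀ n : ℤ,
        C (a n) * (φt t n * θ (n+1) - φt t (n+1) * θ n)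
          - C (a (n-1)) * (φt t (n-1) * θ n - φt t n * θ (n-1))
          = C (t * v n) * (φt t n * θ n) := by
      intro n
      have hs := wronskian_step a (fun m => b m + t * v m) b (φt t) θ (hφt_rec t) hθ_rec n
      linear_combination hs + (φt t n * θ n) * hCb n
    have sum1 : ∀ N : ℕ,
        C (a ((N:ℤ)-1)) * (θt t ((N:ℤ)-1) * φ (N:ℤ) - θt t (N:ℤ) * φ ((N:ℤ)-1))
          - C (a (-1)) * (θt t (-1) * φ 0 - θt t 0 * φ (-1))
          = ∑ i ∈ Finset.range N, C (t * v (i:ℤ)) * (θt t (i:ℤ) * φ (i:ℤ)) := by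
      intro N
      induction N with
      | zero => norm_num
      | succ N ih =>
        rw [Finset.sum_range_succ, ← ih]
        push_cast
        rw [show (N:ℤ)+1-1 = (N:ℤ) by ring]
        linear_combination hstep1 (N:ℤ)
    have sum2 : ∀ N : ℕ,
        C (a ((N:ℤ)-1)) * (φt t ((N:ℤ)-1) * θ (N:ℤ) - φt t (N:ℤ) * θ ((N:ℤ)-1))
          - C (a (-1)) * (φt t (-1) * θ 0 - φt t 0 * θ (-1))
          = ∑ i ∈ Finset.range N, C (t * v (i:ℤ)) * (φt t (i:ℤ) * θ (i:ℤ)) := by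
      intro N
      induction N with
      | zero => norm_num
      | succ N ih =>
        rw [Finset.sum_range_succ, ← ih]
        push_cast
        rw [show (N:ℤ)+1-1 = (N:ℤ) by ring]
        linear_combination hstep2 (N:ℤ)
    -- endpoints
    have hbcθ1 : θt t ((p:ℤ)+1) = θ ((p:ℤ)+1) := hθt_bc t _ (by omega)
    have hbcθ2 : θt t ((p:ℤ)+2) = θ ((p:ℤ)+2) := hθt_bc t _ (by omega)
    have hbcφ1 : φt t ((p:ℤ)+1) = φ ((p:ℤ)+1) := hφt_bc t _ (by omega)
    have hbcφ2 : φt t ((p:ℤ)+2) = φ ((p:ℤ)+2) := hφt_bc t _ (by omega)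
    have hWtop : C (a ((p:ℤ)+1)) * (θ ((p:ℤ)+1) * φ ((p:ℤ)+2) - θ ((p:ℤ)+2) * φ ((p:ℤ)+1))
        = C (a 0) := by
      have := hWconst (p+1)
      push_cast at this
      rw [show (p:ℤ)+1+1 = (p:ℤ)+2 by ring] at this
      exact this
    have id1 := sum1 (p+2)
    have id2 := sum2 (p+2)
    push_cast at id1 id2
    rw [show (p:ℤ)+2-1 = (p:ℤ)+1 by ring] at id1 id2
    rw [hbcθ1, hbcθ2] at id1
    rw [hbcφ1, hbcφ2] at id2
    have e2 := hφt_rec t 0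
    norm_num at e2
    have hCv : (C (t * v 0) : Polynomial ℝ) = C t * C (v 0) := by rw [C_mul]
    simp only [mul_sub, Finset.sum_sub_distrib]
    linear_combination φt t 0 * hCv + id2 - id1 + 2 * hWtop - C (a (-1)) * θt t (-1) * hφ0
      + θt t 0 * hφm1 + C (a (-1)) * φt t (-1) * hθ0 - φt t 0 * hθm1 + e2

  have hPθ0 : ∀ n : ℤ, eval 0 (Pθ n) = aeval lam (θ n) := by
    intro n
    have h := hPθ n 0
    rw [hθzero] at h
    simpa using h.symm
  have hPφ0 : ∀ n : ℤ, eval 0 (Pφ n) = aeval lam (φ n) := by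
    intro n
    have h := hPφ n 0
    rw [hφzero] at h
    simpa using h.symm
  set G : Polynomial ℂ := ∑ i ∈ Finset.range (p+2),
      Polynomial.C ((v (i:ℤ) : ℝ):ℂ) * (Pφ (i:ℤ) * Polynomial.C (aeval lam (θ (i:ℤ)))
        - Pθ (i:ℤ) * Polynomial.C (aeval lam (φ (i:ℤ)))) with hGdef
  have hGeval : ∀ s : ℂ, eval s G = ∑ i ∈ Finset.range (p+2),
      ((v (i:ℤ) : ℝ):ℂ) * (eval s (Pφ (i:ℤ)) * aeval lam (θ (i:ℤ))
        - eval s (Pθ (i:ℤ)) * aeval lam (φ (i:ℤ))) := by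
    intro s
    rw [hGdef]
    simp [eval_finset_sum]
  have hG0 : eval 0 G = 0 := by
    rw [hGeval]
    apply Finset.sum_eq_zero
    intro i _
    rw [hPθ0, hPφ0]
    ring
  obtain ⟨H, hH⟩ : ∃ H, G = X * H := by
    have : Polynomial.X ∣ G := by
      rw [Polynomial.X_dvd_iff, Polynomial.coeff_zero_eq_eval_zero]
      exact hG0
    exact this
  have key : ∀ t : ℝ, Af lam t = (t:ℂ)^2 * ((2:ℂ)⁻¹ * ((a 0 : ℝ):ℂ)⁻¹ * eval (t:ℂ) H) := by
    intro t
    have h := congrArg (aeval lam) (polyid t)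
    simp only [map_add, map_sub, map_mul, map_one, map_sum, aeval_C,
      Complex.coe_algebraMap, Complex.ofReal_mul, hPθ, hPφ] at h
    have hsum : ∑ x ∈ Finset.range (p + 2),
        (↑t:ℂ) * ↑(v (x:ℤ)) * (eval (↑t:ℂ) (Pφ (x:ℤ)) * (aeval lam) (θ (x:ℤ))
          - eval (↑t:ℂ) (Pθ (x:ℤ)) * (aeval lam) (φ (x:ℤ))) = (t:ℂ) * eval (t:ℂ) G := by
      rw [hGeval, Finset.mul_sum]
      apply Finset.sum_congr rfl
      intro x _
      ring
    rw [hsum, hH, eval_mul, eval_X] at h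
    rw [hAf, hφ1, hθ0, map_one]
    simp only [hPθ, hPφ]
    have ha0 : ((a 0 : ℝ):ℂ) ≠ 0 := Complex.ofReal_ne_zero.mpr (ha 0)
    push_cast
    field_simp
    linear_combination h
  have heq : (fun t : ℝ => Af lam t)
      = fun t : ℝ => (t:ℂ)^2 * ((2:ℂ)⁻¹ * ((a 0 : ℝ):ℂ)⁻¹ * eval (t:ℂ) H) := funext key
  constructor
  · rw [heq]
    have h1 : HasDerivAt (fun t : ℝ => ((t:ℝ):ℂ)) 1 0 := by
      simpa using (hasDerivAt_id (0:ℝ)).ofReal_comp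
    have h2 : HasDerivAt (fun t : ℝ => ((t:ℝ):ℂ)^2) 0 0 := by
      have hm := h1.mul h1
      norm_num at hm
      exact hm.congr_of_eventuallyEq (by filter_upwards with x using by simp [sq])
    have h3 : HasDerivAt (fun t : ℝ => eval ((t:ℝ):ℂ) H) (eval 0 (derivative H)) 0 := by
      have h4 := Polynomial.hasDerivAt H ((0:ℝ):ℂ)
      simpa using h4.comp_ofReal
    have h5 := h3.const_mul ((2:ℂ)⁻¹ * ((a 0 : ℝ):ℂ)⁻¹)
    have h6 := h2.mul h5
    simp only [zero_mul, mul_zero, zero_add, add_zero] at h6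
    convert h6 using 1 <;> first | rfl | simp
  · rw [heq]
    have hb1 : (fun t : ℝ => ((t:ℂ))^2) =O[nhds (0:ℝ)] (fun t : ℝ => t^2) := by
      apply Asymptotics.isBigO_of_le
      intro x
      simp
    have hcont : Continuous fun t : ℝ => (2:ℂ)⁻¹ * ((a 0 : ℝ):ℂ)⁻¹ * eval ((t:ℝ):ℂ) H :=
      continuous_const.mul (H.continuous.comp Complex.continuous_ofReal)
    have hb2 : (fun t : ℝ => (2:ℂ)⁻¹ * ((a 0 : ℝ):ℂ)⁻¹ * eval ((t:ℝ):ℂ) H)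
        =O[nhds (0:ℝ)] (fun _ : ℝ => (1:ℝ)) := (hcont.tendsto 0).isBigO_one ℝ
    simpa using hb1.mul hb2
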